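/- Let α ∈ (0,1), ε > 0, ε' = ((1+α)/(2√α))·ε. Every 'higher segment' of Ω_ε = {(x₁,x₂) : x₁² ≤ x₂ ≤ x₁² + ε²} is contained in Ω_{ε'}. Concretely: if x and z lie on the parabola x₂ = x₁² + ε², y lies on x₂ = x₁², z = αx + (1−α)y, and the segment [z,y] ⊂ Ω_ε, then [x,y] ⊂ Ω_{ε'} = {(x₁,x₂) : x₁² ≤ x₂ ≤ x₁² + ε'²}. -/

import Mathlib

open Set Real

/-- Every higher segment of the parabolic strip Ω_ε is contained in Ω_{ε'} with
ε' = ((1+α)/(2√α))ε: if x and z = αx + (1−α)y lie on the upper parabola x₂ = x₁² + ε²,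
y lies on the lower parabola x₂ = x₁², and [z,y] ⊆ Ω_ε, then [x,y] ⊆ Ω_{ε'}. -/
theorem stmt17 (α ε : ℝ) (hα : α ∈ Set.Ioo (0 : ℝ) 1) (hε : 0 < ε)
    (ε' : ℝ) (hε' : ε' = ((1 + α) / (2 * Real.sqrt α)) * ε)
    (x y z : ℝ × ℝ)
    (hx : x.2 = x.1 ^ 2 + ε ^ 2) (hz : z.2 = z.1 ^ 2 + ε ^ 2) (hy : y.2 = y.1 ^ 2)
    (hcomb : z = α • x + (1 - α) • y)
    (hseg : segment ℝ z y ⊆ {p : ℝ × ℝ | p.1 ^ 2 ≤ p.2 ∧ p.2 ≤ p.1 ^ 2 + ε ^ 2}) :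
    segment ℝ x y ⊆ {p : ℝ × ℝ | p.1 ^ 2 ≤ p.2 ∧ p.2 ≤ p.1 ^ 2 + ε' ^ 2} := by
  obtain ⟨hα0, hα1⟩ := hα
  have hz1 : z.1 = α * x.1 + (1 - α) * y.1 := by rw [hcomb]; simp
  have hz2 : z.2 = α * x.2 + (1 - α) * y.2 := by rw [hcomb]; simp
  have hs : Real.sqrt α ^ 2 = α := Real.sq_sqrt hα0.le
  have hspos : 0 < Real.sqrt α := Real.sqrt_pos.mpr hα0
  -- key identity: α (x₁ - y₁)² = ε²
  have key : α * (x.1 - y.1) ^ 2 = ε ^ 2 := by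
    rw [hz1, hz2, hx, hy] at hz
    have h2 : (1 - α) * (α * (x.1 - y.1) ^ 2) = (1 - α) * ε ^ 2 := by linear_combination hz
    have := mul_left_cancel₀ (by linarith : (1 - α) ≠ 0) h2
    linarith
  have hε'2 : ε' ^ 2 = (1 + α) ^ 2 / (4 * α) * ε ^ 2 := by
    rw [hε']
    field_simp
    nlinarith [hs, hspos]
  rintro p ⟨a, b, ha, hb, hab, rfl⟩
  have hp1 : (a • x + b • y).1 = a * x.1 + b * y.1 := by simp
  have hp2 : (a • x + b • y).2 = a * x.2 + b * y.2 := by simp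
  constructor
  · show (a • x + b • y).1 ^ 2 ≤ (a • x + b • y).2
    rw [hp1, hp2, hx, hy]
    nlinarith [mul_nonneg ha hb, sq_nonneg (x.1 - y.1), sq_nonneg ε, mul_nonneg (mul_nonneg ha hb) (sq_nonneg (x.1 - y.1)), mul_nonneg ha (sq_nonneg ε)]
  · show (a • x + b • y).2 ≤ (a • x + b • y).1 ^ 2 + ε' ^ 2
    rw [hp1, hp2, hx, hy]
    have hd : ε' ^ 2 = (1 + α) ^ 2 / 4 * (x.1 - y.1) ^ 2 := by
      rw [hε'2, ← key]; field_simp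
    rw [hd]
    have hb' : b = 1 - a := by linarith
    subst hb'
    have ha2 : a * ε ^ 2 = a * (α * (x.1 - y.1) ^ 2) := by rw [key]
    linarith [mul_nonneg (sq_nonneg (a - (1 + α) / 2)) (sq_nonneg (x.1 - y.1)), ha2.le, ha2.ge]
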